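/- Let x be large, let p ≤ √(x/2) be a prime, let √(2x) < Q ≤ x, and let 𝒜 = (a_n)_{n ≤ x} be the sequence a_n := 1_{p | n}. Then the exact identity V(𝒜,x,Q) = V(ℕ, x/p, Q) − Σ_{Q/2 < q ≤ Q, p | q} Σ_{1 ≤ a ≤ q} | ℕ(x/p; q, a) − Aver(ℕ, x/p; q, (a,q)) |² + V(ℕ, x/p, Q/p) holds, where ℕ denotes the constant sequence equal to 1. -/

import Mathlib

open scoped Classical

/-- `𝒜(z;q,b) := Σ_{n ≤ z, n ≡ b (mod q)} a_n`, for a real sequence `a`. -/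
noncomputable def seqSum (a : ℕ → ℝ) (z : ℝ) (q b : ℕ) : ℝ :=
  ∑ n ∈ (Finset.Icc 1 ⌊z⌋₊).filter (fun n => n % q = b % q), a n

/-- `Aver(𝒜,z;q,h) := (1/φ(q/h)) Σ_{1 ≤ b ≤ q, (b,q)=h} 𝒜(z;q,b)`, for `h ∣ q`. -/
noncomputable def seqAver (a : ℕ → ℝ) (z : ℝ) (q h : ℕ) : ℝ :=
  (1 / (Nat.totient (q / h) : ℝ)) *
    ∑ b ∈ (Finset.Icc 1 q).filter (fun b => Nat.gcd b q = h), seqSum a z q b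

/-- The Barban–Davenport–Halberstam type variance
`V(𝒜,x,Q) := Σ_{Q/2 < q ≤ Q} Σ_{1 ≤ b ≤ q} |𝒜(x;q,b) − Aver(𝒜,x;q,(b,q))|²`. -/
noncomputable def varV (a : ℕ → ℝ) (x Q : ℝ) : ℝ :=
  ∑ q ∈ Finset.Ioc ⌊Q / 2⌋₊ ⌊Q⌋₊, ∑ b ∈ Finset.Icc 1 q,
    (seqSum a x q b - seqAver a x q (Nat.gcd b q)) ^ 2

/-- normal representative in [1,q] of t mod q -/
def nrm (q t : ℕ) : ℕ := if t % q = 0 then q else t % q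

lemma nrm_mem {q : ℕ} (hq : 0 < q) (t : ℕ) : nrm q t ∈ Finset.Icc 1 q := by
  have hlt := Nat.mod_lt t hq
  rcases eq_or_ne (t % q) 0 with h | h
  · rw [nrm, if_pos h, Finset.mem_Icc]; omega
  · rw [nrm, if_neg h, Finset.mem_Icc]; omega

lemma nrm_mod {q : ℕ} (hq : 0 < q) (t : ℕ) : nrm q t % q = t % q := by
  rcases eq_or_ne (t % q) 0 with h | h
  · rw [nrm, if_pos h, h, Nat.mod_self]
  · rw [nrm, if_neg h, Nat.mod_eq_of_lt (Nat.mod_lt _ hq)]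

lemma nrm_eq_of {q b t : ℕ} (hb : b ∈ Finset.Icc 1 q) (ht : t % q = b % q) :
    nrm q t = b := by
  simp only [Finset.mem_Icc] at hb
  unfold nrm
  rw [ht]
  rcases eq_or_ne b q with rfl | h
  · simp
  · have hbq : b < q := lt_of_le_of_ne hb.2 h
    rw [Nat.mod_eq_of_lt hbq]
    have : b ≠ 0 := by omega
    simp [this]

lemma gcd_mod_left (b q : ℕ) : Nat.gcd b q = Nat.gcd (b % q) q := by
  rw [Nat.gcd_comm, Nat.gcd_rec]

lemma seqSum_congr {a : ℕ → ℝ} {z : ℝ} {q b c : ℕ} (h : b % q = c % q) :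
    seqSum a z q b = seqSum a z q c := by
  unfold seqSum; simp only [h]

lemma mod_lemma1 {p u q m b : ℕ} (hu : (u * p) % q = 1 % q)
    (h : m % q = (u * b) % q) : (p * m) % q = b % q := by
  calc (p * m) % q = (p * (u * b)) % q := by
        rw [Nat.mul_mod, h, ← Nat.mul_mod]
    _ = ((u * p) * b) % q := by ring_nf
    _ = (1 * b) % q := by rw [← Nat.mod_mul_mod, hu, Nat.mod_mul_mod]
    _ = b % q := by rw [one_mul]

lemma mod_lemma2 {p u q m b : ℕ} (hu : (u * p) % q = 1 % q)
    (h : (p * m) % q = b % q) : m % q = (u * b) % q := by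
  have h1 : ((u * p) * m) % q = m % q := by
    rw [← Nat.mod_mul_mod, hu, Nat.mod_mul_mod, one_mul]
  calc m % q = ((u * p) * m) % q := h1.symm
    _ = (u * (p * m)) % q := by ring_nf
    _ = (u * b) % q := by rw [Nat.mul_mod, h, ← Nat.mul_mod]

lemma seqSum_indicator (p q b : ℕ) (x : ℝ) :
    seqSum (fun n => if p ∣ n then (1:ℝ) else 0) x q b
      = (((Finset.Icc 1 ⌊x⌋₊).filter (fun n => n % q = b % q)).filter
          (fun n => p ∣ n)).card := by
  unfold seqSum
  rw [Finset.sum_boole]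

lemma seqSum_one (z : ℝ) (q b : ℕ) :
    seqSum (fun _ => (1:ℝ)) z q b
      = ((Finset.Icc 1 ⌊z⌋₊).filter (fun n => n % q = b % q)).card := by
  unfold seqSum
  simp

lemma mul_mem_Icc {p m N : ℕ} (hp : 0 < p) :
    p * m ∈ Finset.Icc 1 N ↔ m ∈ Finset.Icc 1 (N / p) := by
  simp only [Finset.mem_Icc]
  rw [Nat.le_div_iff_mul_le hp, mul_comm m p]
  constructor
  · rintro ⟨h1, h2⟩
    refine ⟨?_, h2⟩
    rcases Nat.eq_zero_or_pos m with rfl | h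
    · simp at h1
    · exact h
  · rintro ⟨h1, h2⟩
    exact ⟨Nat.one_le_iff_ne_zero.2 (Nat.mul_ne_zero hp.ne' (by omega)), h2⟩

lemma seqSum_A_coprime {p : ℕ} (hp : 0 < p) (x : ℝ) {q u : ℕ} (hq : 0 < q)
    (hu : (u * p) % q = 1 % q) (b : ℕ) :
    seqSum (fun n => if p ∣ n then (1:ℝ) else 0) x q b
      = seqSum (fun _ => 1) (x / p) q (u * b) := by
  rw [seqSum_indicator, seqSum_one, Nat.floor_div_natCast]
  norm_cast
  apply Finset.card_nbij' (fun n => n / p) (fun m => p * m)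
  · intro n hn
    simp only [Finset.mem_coe, Finset.mem_filter] at hn
    obtain ⟨⟨hn1, hn2⟩, hdvd⟩ := hn
    obtain ⟨m, rfl⟩ := hdvd
    beta_reduce
    rw [Nat.mul_div_cancel_left m hp]
    simp only [Finset.mem_coe, Finset.mem_filter]
    exact ⟨(mul_mem_Icc hp).1 hn1, mod_lemma2 hu hn2⟩
  · intro m hm
    simp only [Finset.mem_coe, Finset.mem_filter] at hm ⊢
    exact ⟨⟨(mul_mem_Icc hp).2 hm.1, mod_lemma1 hu hm.2⟩, ⟨m, rfl⟩⟩
  · intro n hn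
    simp only [Finset.mem_coe, Finset.mem_filter] at hn
    exact Nat.mul_div_cancel' hn.2
  · intro m _
    exact Nat.mul_div_cancel_left m hp

lemma seqSum_A_mul {p : ℕ} (hp : 0 < p) (x : ℝ) (r c : ℕ) :
    seqSum (fun n => if p ∣ n then (1:ℝ) else 0) x (p * r) (p * c)
      = seqSum (fun _ => 1) (x / p) r c := by
  rw [seqSum_indicator, seqSum_one, Nat.floor_div_natCast]
  norm_cast
  apply Finset.card_nbij' (fun n => n / p) (fun m => p * m)
  · intro n hn
    simp only [Finset.mem_coe, Finset.mem_filter] at hn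
    obtain ⟨⟨hn1, hn2⟩, hdvd⟩ := hn
    obtain ⟨m, rfl⟩ := hdvd
    beta_reduce
    rw [Nat.mul_div_cancel_left m hp]
    rw [Nat.mul_mod_mul_left, Nat.mul_mod_mul_left] at hn2
    simp only [Finset.mem_coe, Finset.mem_filter]
    exact ⟨(mul_mem_Icc hp).1 hn1, Nat.eq_of_mul_eq_mul_left hp hn2⟩
  · intro m hm
    simp only [Finset.mem_coe, Finset.mem_filter] at hm ⊢
    refine ⟨⟨(mul_mem_Icc hp).2 hm.1, ?_⟩, ⟨m, rfl⟩⟩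
    rw [Nat.mul_mod_mul_left, Nat.mul_mod_mul_left, hm.2]
  · intro n hn
    simp only [Finset.mem_coe, Finset.mem_filter] at hn
    exact Nat.mul_div_cancel' hn.2
  · intro m _
    exact Nat.mul_div_cancel_left m hp

lemma seqSum_A_zero {p q b : ℕ} (hpq : p ∣ q) (hb : ¬ p ∣ b) (x : ℝ) :
    seqSum (fun n => if p ∣ n then (1:ℝ) else 0) x q b = 0 := by
  unfold seqSum
  apply Finset.sum_eq_zero
  intro n hn
  simp only [Finset.mem_filter] at hn
  rw [if_neg]
  intro hpn
  exact hb ((Nat.dvd_mod_iff hpq).1 (hn.2 ▸ (Nat.dvd_mod_iff hpq).2 hpn))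

lemma gcd_nrm {q : ℕ} (hq : 0 < q) (t : ℕ) : Nat.gcd (nrm q t) q = Nat.gcd t q := by
  rw [gcd_mod_left, nrm_mod hq, ← gcd_mod_left]

lemma nrm_inv1 {p u q b : ℕ} (hq : 0 < q) (hu : (u * p) % q = 1 % q)
    (hb : b ∈ Finset.Icc 1 q) : nrm q (p * nrm q (u * b)) = b :=
  nrm_eq_of hb (mod_lemma1 hu (nrm_mod hq _))

lemma nrm_inv2 {p u q b : ℕ} (hq : 0 < q) (hu : (u * p) % q = 1 % q)
    (hb : b ∈ Finset.Icc 1 q) : nrm q (u * nrm q (p * b)) = b := by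
  refine nrm_eq_of hb ?_
  have := mod_lemma2 (m := b) hu (nrm_mod hq (p * b)).symm
  omega

lemma exists_inv {p q : ℕ} (hp : p.Prime) (hq : 0 < q) (hpq : ¬ p ∣ q) :
    ∃ u : ℕ, (u * p) % q = 1 % q ∧ u.Coprime q := by
  haveI : NeZero q := ⟨hq.ne'⟩
  have hcop : p.Coprime q := (Nat.Prime.coprime_iff_not_dvd hp).2 hpq
  have hunit : IsUnit ((p : ℕ) : ZMod q) := (ZMod.isUnit_iff_coprime p q).2 hcop
  set U := hunit.unit with hU
  refine ⟨((U⁻¹ : (ZMod q)ˣ) : ZMod q).val, ?_, ZMod.val_coe_unit_coprime U⁻¹⟩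
  have key : ((((U⁻¹ : (ZMod q)ˣ) : ZMod q).val * p : ℕ) : ZMod q) = ((1 : ℕ) : ZMod q) := by
    push_cast
    rw [ZMod.natCast_rightInverse _]
    have hUp : (U : ZMod q) = ((p : ℕ) : ZMod q) := hunit.unit_spec
    rw [← hUp]
    exact U.inv_mul
  exact (ZMod.natCast_eq_natCast_iff _ _ _).1 key

lemma seqAver_A_coprime {p : ℕ} (hp : 0 < p) (x : ℝ) {q u : ℕ} (hq : 0 < q)
    (hu : (u * p) % q = 1 % q) (hu2 : u.Coprime q) (hpq : p.Coprime q) (h : ℕ) :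
    seqAver (fun n => if p ∣ n then (1:ℝ) else 0) x q h
      = seqAver (fun _ => 1) (x / p) q h := by
  unfold seqAver
  congr 1
  refine Finset.sum_nbij' (fun b => nrm q (u * b)) (fun b => nrm q (p * b))
    ?_ ?_ ?_ ?_ ?_
  · intro b hb
    simp only [Finset.mem_filter] at hb ⊢
    refine ⟨nrm_mem hq _, ?_⟩
    rw [gcd_nrm hq, Nat.Coprime.gcd_mul_left_cancel _ hu2]
    exact hb.2
  · intro b hb
    simp only [Finset.mem_filter] at hb ⊢
    refine ⟨nrm_mem hq _, ?_⟩
    rw [gcd_nrm hq, Nat.Coprime.gcd_mul_left_cancel _ hpq]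
    exact hb.2
  · intro b hb
    exact nrm_inv1 hq hu (Finset.mem_of_mem_filter _ hb)
  · intro b hb
    exact nrm_inv2 hq hu (Finset.mem_of_mem_filter _ hb)
  · intro b _
    rw [seqSum_congr (nrm_mod hq _), ← seqSum_A_coprime hp x hq hu b]

lemma inner_coprime {p : ℕ} (hp : p.Prime) (x : ℝ) {q : ℕ} (hq : 0 < q)
    (hpq : ¬ p ∣ q) :
    ∑ b ∈ Finset.Icc 1 q,
      (seqSum (fun n => if p ∣ n then (1:ℝ) else 0) x q b
        - seqAver (fun n => if p ∣ n then (1:ℝ) else 0) x q (Nat.gcd b q)) ^ 2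
    = ∑ b ∈ Finset.Icc 1 q,
      (seqSum (fun _ => 1) (x / p) q b
        - seqAver (fun _ => 1) (x / p) q (Nat.gcd b q)) ^ 2 := by
  obtain ⟨u, hu, hu2⟩ := exists_inv hp hq hpq
  have hcop : p.Coprime q := (Nat.Prime.coprime_iff_not_dvd hp).2 hpq
  refine Finset.sum_nbij' (fun b => nrm q (u * b)) (fun b => nrm q (p * b))
    (fun b _ => nrm_mem hq _) (fun b _ => nrm_mem hq _)
    (fun b hb => nrm_inv1 hq hu hb) (fun b hb => nrm_inv2 hq hu hb) ?_
  intro b _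
  rw [seqSum_congr (nrm_mod hq _), ← seqSum_A_coprime hp.pos x hq hu b,
    gcd_nrm hq, Nat.Coprime.gcd_mul_left_cancel _ hu2,
    seqAver_A_coprime hp.pos x hq hu hu2 hcop]

lemma seqAver_A_mul {p : ℕ} (hp : 0 < p) (x : ℝ) (r k : ℕ) :
    seqAver (fun n => if p ∣ n then (1:ℝ) else 0) x (p * r) (p * k)
      = seqAver (fun _ => 1) (x / p) r k := by
  unfold seqAver
  rw [Nat.mul_div_mul_left _ _ hp]
  congr 1
  refine Finset.sum_nbij' (fun b => b / p) (fun c => p * c) ?_ ?_ ?_ ?_ ?_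
  · intro b hb
    simp only [Finset.mem_filter] at hb
    have hpb : p ∣ b := Nat.dvd_trans (hb.2 ▸ Dvd.intro k rfl) (Nat.gcd_dvd_left _ _)
    obtain ⟨c, rfl⟩ := hpb
    beta_reduce
    rw [Nat.mul_div_cancel_left c hp]
    simp only [Finset.mem_filter]
    refine ⟨?_, ?_⟩
    · have := (mul_mem_Icc hp).1 hb.1
      rwa [Nat.mul_div_cancel_left r hp] at this
    · have := hb.2
      rw [Nat.gcd_mul_left] at this
      exact Nat.eq_of_mul_eq_mul_left hp this
  · intro c hc
    simp only [Finset.mem_filter] at hc ⊢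
    refine ⟨?_, by rw [Nat.gcd_mul_left, hc.2]⟩
    rw [mul_mem_Icc hp, Nat.mul_div_cancel_left r hp]
    exact hc.1
  · intro b hb
    simp only [Finset.mem_filter] at hb
    have hpb : p ∣ b := Nat.dvd_trans (hb.2 ▸ Dvd.intro k rfl) (Nat.gcd_dvd_left _ _)
    exact Nat.mul_div_cancel' hpb
  · intro c _
    exact Nat.mul_div_cancel_left c hp
  · intro b hb
    simp only [Finset.mem_filter] at hb
    have hpb : p ∣ b := Nat.dvd_trans (hb.2 ▸ Dvd.intro k rfl) (Nat.gcd_dvd_left _ _)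
    calc seqSum (fun n => if p ∣ n then (1:ℝ) else 0) x (p * r) b
        = seqSum (fun n => if p ∣ n then (1:ℝ) else 0) x (p * r) (p * (b / p)) := by
          rw [Nat.mul_div_cancel' hpb]
      _ = seqSum (fun _ => 1) (x / p) r (b / p) := seqSum_A_mul hp x r _

lemma seqAver_A_not_dvd {p q h : ℕ} (hpq : p ∣ q) (hh : ¬ p ∣ h) (x : ℝ) :
    seqAver (fun n => if p ∣ n then (1:ℝ) else 0) x q h = 0 := by
  unfold seqAver
  rw [Finset.sum_eq_zero, mul_zero]
  intro b hb
  simp only [Finset.mem_filter] at hb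
  refine seqSum_A_zero hpq (fun hpb => hh ?_) x
  exact hb.2 ▸ Nat.dvd_gcd hpb hpq

lemma inner_mul {p : ℕ} (hp : 0 < p) (x : ℝ) (r : ℕ) :
    ∑ b ∈ Finset.Icc 1 (p * r),
      (seqSum (fun n => if p ∣ n then (1:ℝ) else 0) x (p * r) b
        - seqAver (fun n => if p ∣ n then (1:ℝ) else 0) x (p * r) (Nat.gcd b (p * r))) ^ 2
    = ∑ c ∈ Finset.Icc 1 r,
      (seqSum (fun _ => 1) (x / p) r c
        - seqAver (fun _ => 1) (x / p) r (Nat.gcd c r)) ^ 2 := by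
  rw [← Finset.sum_filter_add_sum_filter_not (Finset.Icc 1 (p * r)) (fun b => p ∣ b)]
  have h2 : ∑ b ∈ (Finset.Icc 1 (p * r)).filter (fun b => ¬ p ∣ b),
      (seqSum (fun n => if p ∣ n then (1:ℝ) else 0) x (p * r) b
        - seqAver (fun n => if p ∣ n then (1:ℝ) else 0) x (p * r) (Nat.gcd b (p * r))) ^ 2
      = 0 := by
    apply Finset.sum_eq_zero
    intro b hb
    simp only [Finset.mem_filter] at hb
    have h1 := seqSum_A_zero (Dvd.intro r rfl) hb.2 x
    have h2 := seqAver_A_not_dvd (h := Nat.gcd b (p * r)) (Dvd.intro r rfl)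
      (fun hd => hb.2 (hd.trans (Nat.gcd_dvd_left _ _))) x
    rw [h1, h2]
    ring
  rw [h2, add_zero]
  refine Finset.sum_nbij' (fun b => b / p) (fun c => p * c) ?_ ?_ ?_ ?_ ?_
  · intro b hb
    simp only [Finset.mem_filter] at hb
    obtain ⟨c, rfl⟩ := hb.2
    beta_reduce
    rw [Nat.mul_div_cancel_left c hp]
    have := (mul_mem_Icc hp).1 hb.1
    rwa [Nat.mul_div_cancel_left r hp] at this
  · intro c hc
    simp only [Finset.mem_filter]
    refine ⟨?_, Dvd.intro c rfl⟩
    rw [mul_mem_Icc hp, Nat.mul_div_cancel_left r hp]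
    exact hc
  · intro b hb
    simp only [Finset.mem_filter] at hb
    exact Nat.mul_div_cancel' hb.2
  · intro c _
    exact Nat.mul_div_cancel_left c hp
  · intro b hb
    simp only [Finset.mem_filter] at hb
    obtain ⟨c, rfl⟩ := hb.2
    beta_reduce
    rw [Nat.mul_div_cancel_left c hp, seqSum_A_mul hp x r c, Nat.gcd_mul_left,
      seqAver_A_mul hp x r _]

/-- The worked example from the introduction: for `x` large, a prime `p ≤ √(x/2)`,
`√(2x) < Q ≤ x`, and the sequence `a_n := 1_{p ∣ n}`, the exact identity
`V(𝒜,x,Q) = V(ℕ,x/p,Q)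
  − Σ_{Q/2 < q ≤ Q, p ∣ q} Σ_{1 ≤ b ≤ q} |ℕ(x/p;q,b) − Aver(ℕ,x/p;q,(b,q))|²
  + V(ℕ,x/p,Q/p)` holds, where `ℕ` denotes the constant sequence equal to `1`. -/
theorem statement_12 (x Q : ℝ) (p : ℕ) (hp : p.Prime) (hx : 2 ≤ x)
    (hpx : (p : ℝ) ≤ Real.sqrt (x / 2)) (hQ1 : Real.sqrt (2 * x) < Q) (hQ2 : Q ≤ x) :
    varV (fun n => if p ∣ n then 1 else 0) x Q
      = varV (fun _ => 1) (x / p) Q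
        - (∑ q ∈ (Finset.Ioc ⌊Q / 2⌋₊ ⌊Q⌋₊).filter (fun q => p ∣ q),
            ∑ b ∈ Finset.Icc 1 q,
              (seqSum (fun _ => 1) (x / p) q b -
                seqAver (fun _ => 1) (x / p) q (Nat.gcd b q)) ^ 2)
        + varV (fun _ => 1) (x / p) (Q / p) := by
  have hp1 : 0 < p := hp.pos
  set L := ⌊Q / 2⌋₊ with hL
  set N := ⌊Q⌋₊ with hN
  set FA : ℕ → ℝ := fun q => ∑ b ∈ Finset.Icc 1 q,
    (seqSum (fun n => if p ∣ n then (1:ℝ) else 0) x q b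
      - seqAver (fun n => if p ∣ n then (1:ℝ) else 0) x q (Nat.gcd b q)) ^ 2 with hFA
  set F1 : ℕ → ℝ := fun q => ∑ b ∈ Finset.Icc 1 q,
    (seqSum (fun _ => 1) (x / p) q b
      - seqAver (fun _ => 1) (x / p) q (Nat.gcd b q)) ^ 2 with hF1
  have e0 : ∑ q ∈ (Finset.Ioc L N).filter (fun q => p ∣ q), FA q
      + ∑ q ∈ (Finset.Ioc L N).filter (fun q => ¬ p ∣ q), FA q
      = ∑ q ∈ Finset.Ioc L N, FA q :=
    Finset.sum_filter_add_sum_filter_not _ _ _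
  have e0' : ∑ q ∈ (Finset.Ioc L N).filter (fun q => p ∣ q), F1 q
      + ∑ q ∈ (Finset.Ioc L N).filter (fun q => ¬ p ∣ q), F1 q
      = ∑ q ∈ Finset.Ioc L N, F1 q :=
    Finset.sum_filter_add_sum_filter_not _ _ _
  have e1 : ∑ q ∈ (Finset.Ioc L N).filter (fun q => ¬ p ∣ q), FA q
      = ∑ q ∈ (Finset.Ioc L N).filter (fun q => ¬ p ∣ q), F1 q := by
    refine Finset.sum_congr rfl ?_
    intro q hq
    simp only [Finset.mem_filter, Finset.mem_Ioc] at hq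
    have hq0 : 0 < q := by omega
    exact inner_coprime hp x hq0 hq.2
  have e2 : ∑ q ∈ (Finset.Ioc L N).filter (fun q => p ∣ q), FA q
      = ∑ r ∈ Finset.Ioc (L / p) (N / p), F1 r := by
    refine Finset.sum_nbij' (fun q => q / p) (fun r => p * r) ?_ ?_ ?_ ?_ ?_
    · intro q hq
      simp only [Finset.mem_filter, Finset.mem_Ioc] at hq
      obtain ⟨⟨hq1, hq2⟩, c, rfl⟩ := hq
      beta_reduce
      rw [Nat.mul_div_cancel_left c hp1, Finset.mem_Ioc]
      constructor
      · rw [Nat.div_lt_iff_lt_mul hp1, mul_comm]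
        exact hq1
      · rw [Nat.le_div_iff_mul_le hp1, mul_comm]
        exact hq2
    · intro r hr
      simp only [Finset.mem_Ioc] at hr
      simp only [Finset.mem_filter, Finset.mem_Ioc]
      refine ⟨⟨?_, ?_⟩, Dvd.intro r rfl⟩
      · have := hr.1
        rw [Nat.div_lt_iff_lt_mul hp1] at this
        rw [mul_comm p r]
        exact this
      · have := hr.2
        rw [Nat.le_div_iff_mul_le hp1] at this
        rw [mul_comm p r]
        exact this
    · intro q hq
      simp only [Finset.mem_filter] at hq
      exact Nat.mul_div_cancel' hq.2
    · intro r _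
      exact Nat.mul_div_cancel_left r hp1
    · intro q hq
      simp only [Finset.mem_filter] at hq
      obtain ⟨_, c, rfl⟩ := hq
      beta_reduce
      rw [Nat.mul_div_cancel_left c hp1]
      exact inner_mul hp1 x c
  have e3 : varV (fun _ => 1) (x / p) (Q / p)
      = ∑ r ∈ Finset.Ioc (L / p) (N / p), F1 r := by
    rw [varV, hL, hN]
    rw [div_right_comm Q (p : ℝ) 2, Nat.floor_div_natCast (Q / 2) p, Nat.floor_div_natCast Q p]
  have goal1 : varV (fun n => if p ∣ n then (1:ℝ) else 0) x Q
      = ∑ q ∈ Finset.Ioc L N, FA q := rfl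
  have goal2 : varV (fun _ => (1:ℝ)) (x / p) Q = ∑ q ∈ Finset.Ioc L N, F1 q := rfl
  rw [goal1, goal2, e3]
  have : (∑ q ∈ (Finset.Ioc L N).filter (fun q => p ∣ q),
      ∑ b ∈ Finset.Icc 1 q,
        (seqSum (fun _ => 1) (x / p) q b -
          seqAver (fun _ => 1) (x / p) q (Nat.gcd b q)) ^ 2)
      = ∑ q ∈ (Finset.Ioc L N).filter (fun q => p ∣ q), F1 q := rfl
  rw [this]
  linarith [e0, e0', e1, e2]
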